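/- Unbiasedness of any convex combination of the SU, DU and SD risks: for all real numbers γ₁, γ₂, γ₃ with γ₁ + γ₂ + γ₃ = 1 and every measurable f : ℝ^d → ℝ satisfying the integrability assumption, γ₁·R_SU(f) + γ₂·R_DU(f) + γ₃·R_SD(f) = R(f). In particular (1−γ)·R_SD(f) + γ·R_SU(f), (1−γ)·R_SD(f) + γ·R_DU(f) and (1−γ)·R_SU(f) + γ·R_DU(f) all equal R(f) for every γ. -/

import Mathlib

open MeasureTheory
open scoped ENNReal

lemma pair_integrable' {α : Type*} [MeasurableSpace α] (μ ν : Measure α)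
    [IsProbabilityMeasure μ] [IsProbabilityMeasure ν] (g : α → ℝ)
    (hgμ : Integrable g μ) (hgν : Integrable g ν) :
    Integrable (fun p : α × α => (g p.1 + g p.2) / 2) (μ.prod ν) := by
  have h1 : Integrable (fun p : α × α => g p.1) (μ.prod ν) := by
    simpa using hgμ.mul_prod (integrable_const (1 : ℝ))
  have h2 : Integrable (fun p : α × α => g p.2) (μ.prod ν) := by
    simpa using (integrable_const (1 : ℝ)).mul_prod hgν
  exact (h1.add h2).div_const 2

lemma pair_integral' {α : Type*} [MeasurableSpace α] (μ ν : Measure α)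
    [IsProbabilityMeasure μ] [IsProbabilityMeasure ν] (g : α → ℝ)
    (hgμ : Integrable g μ) (hgν : Integrable g ν) :
    ∫ p, (g p.1 + g p.2) / 2 ∂(μ.prod ν) = (∫ x, g x ∂μ + ∫ x, g x ∂ν) / 2 := by
  have h1 : Integrable (fun p : α × α => g p.1) (μ.prod ν) := by
    simpa using hgμ.mul_prod (integrable_const (1 : ℝ))
  have h2 : Integrable (fun p : α × α => g p.2) (μ.prod ν) := by
    simpa using (integrable_const (1 : ℝ)).mul_prod hgν
  rw [integral_div, integral_add h1 h2, integral_fun_fst, integral_fun_snd]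
  simp

/-- Unbiasedness of any convex combination of the SU, DU and SD risks. -/
theorem sdu_combination_unbiased {d : ℕ} (hd : 1 ≤ d)
    (μp μm : Measure (Fin d → ℝ)) [IsProbabilityMeasure μp] [IsProbabilityMeasure μm]
    (πp πm : ℝ) (hπp : πp ∈ Set.Ioo (0 : ℝ) 1) (hπm : πm = 1 - πp) (hne : πp ≠ πm)
    (πS πD : ℝ) (hπS : πS = πp ^ 2 + πm ^ 2) (hπD : πD = 2 * πp * πm)
    (μU : Measure (Fin d → ℝ))
    (hμU : μU = ENNReal.ofReal πp • μp + ENNReal.ofReal πm • μm)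
    (μS : Measure ((Fin d → ℝ) × (Fin d → ℝ)))
    (hμS : μS = ENNReal.ofReal (πp ^ 2 / πS) • (μp.prod μp)
        + ENNReal.ofReal (πm ^ 2 / πS) • (μm.prod μm))
    (μD : Measure ((Fin d → ℝ) × (Fin d → ℝ)))
    (hμD : μD = ((1 : ℝ≥0∞) / 2) • (μp.prod μm) + ((1 : ℝ≥0∞) / 2) • (μm.prod μp))
    (ℓ : ℝ → ℝ → ℝ) (hℓ : ∀ z t, 0 ≤ ℓ z t)
    (L : ℝ → ℝ → ℝ) (hL : ∀ z t, L z t = (πp * ℓ z t - πm * ℓ z (-t)) / (πp - πm))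
    (Lt : ℝ → ℝ) (hLt : ∀ z, Lt z = (ℓ z 1 - ℓ z (-1)) / (πp - πm))
    (R RSU RDU RSD : ((Fin d → ℝ) → ℝ) → ℝ)
    (hR : ∀ f : (Fin d → ℝ) → ℝ,
      R f = πp * ∫ x, ℓ (f x) 1 ∂μp + πm * ∫ x, ℓ (f x) (-1) ∂μm)
    (hRSU : ∀ f : (Fin d → ℝ) → ℝ,
      RSU f = πS * ∫ p, (Lt (f p.1) + Lt (f p.2)) / 2 ∂μS + ∫ x, L (f x) (-1) ∂μU)
    (hRDU : ∀ f : (Fin d → ℝ) → ℝ,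
      RDU f = πD * ∫ p, -((Lt (f p.1) + Lt (f p.2)) / 2) ∂μD + ∫ x, L (f x) 1 ∂μU)
    (hRSD : ∀ f : (Fin d → ℝ) → ℝ,
      RSD f = πS * ∫ p, (L (f p.1) 1 + L (f p.2) 1) / 2 ∂μS
        + πD * ∫ p, (L (f p.1) (-1) + L (f p.2) (-1)) / 2 ∂μD)
    (f : (Fin d → ℝ) → ℝ) (hf : Measurable f)
    (hintp : ∀ t ∈ ({1, -1} : Set ℝ), Integrable (fun x => ℓ (f x) t) μp)
    (hintm : ∀ t ∈ ({1, -1} : Set ℝ), Integrable (fun x => ℓ (f x) t) μm) :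
    (∀ γ₁ γ₂ γ₃ : ℝ, γ₁ + γ₂ + γ₃ = 1 →
        γ₁ * RSU f + γ₂ * RDU f + γ₃ * RSD f = R f)
      ∧ (∀ γ : ℝ, (1 - γ) * RSD f + γ * RSU f = R f)
      ∧ (∀ γ : ℝ, (1 - γ) * RSD f + γ * RDU f = R f)
      ∧ (∀ γ : ℝ, (1 - γ) * RSU f + γ * RDU f = R f) := by
  subst hπm hπS hπD
  have hπp0 := hπp.1
  have hpm0 : 0 < 1 - πp := by linarith [hπp.2]
  have hpm : πp - (1 - πp) ≠ 0 := sub_ne_zero.mpr hne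
  have hπSpos : 0 < πp ^ 2 + (1 - πp) ^ 2 := by positivity
  have hp1 := hintp 1 (by simp)
  have hpm1 := hintp (-1) (by simp)
  have hm1 := hintm 1 (by simp)
  have hmm1 := hintm (-1) (by simp)
  have hLt' : (fun x => Lt (f x)) = fun x => (ℓ (f x) 1 - ℓ (f x) (-1)) / (πp - (1 - πp)) := by
    funext x; rw [hLt]
  have hL1 : (fun x => L (f x) 1)
      = fun x => (πp * ℓ (f x) 1 - (1 - πp) * ℓ (f x) (-1)) / (πp - (1 - πp)) := by
    funext x; rw [hL]
  have hLm1 : (fun x => L (f x) (-1))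
      = fun x => (πp * ℓ (f x) (-1) - (1 - πp) * ℓ (f x) 1) / (πp - (1 - πp)) := by
    funext x; rw [hL]; norm_num
  have iLtp : Integrable (fun x => Lt (f x)) μp := by
    rw [hLt']; exact (hp1.sub hpm1).div_const _
  have iLtm : Integrable (fun x => Lt (f x)) μm := by
    rw [hLt']; exact (hm1.sub hmm1).div_const _
  have iL1p : Integrable (fun x => L (f x) 1) μp := by
    rw [hL1]; exact ((hp1.const_mul _).sub (hpm1.const_mul _)).div_const _
  have iL1m : Integrable (fun x => L (f x) 1) μm := by
    rw [hL1]; exact ((hm1.const_mul _).sub (hmm1.const_mul _)).div_const _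
  have iLm1p : Integrable (fun x => L (f x) (-1)) μp := by
    rw [hLm1]; exact ((hpm1.const_mul _).sub (hp1.const_mul _)).div_const _
  have iLm1m : Integrable (fun x => L (f x) (-1)) μm := by
    rw [hLm1]; exact ((hmm1.const_mul _).sub (hm1.const_mul _)).div_const _
  -- values of the one-measure integrals
  have eLtp : ∫ x, Lt (f x) ∂μp
      = ((∫ x, ℓ (f x) 1 ∂μp) - ∫ x, ℓ (f x) (-1) ∂μp) / (πp - (1 - πp)) := by
    rw [hLt', integral_div, integral_sub hp1 hpm1]
  have eLtm : ∫ x, Lt (f x) ∂μm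
      = ((∫ x, ℓ (f x) 1 ∂μm) - ∫ x, ℓ (f x) (-1) ∂μm) / (πp - (1 - πp)) := by
    rw [hLt', integral_div, integral_sub hm1 hmm1]
  have eL1p : ∫ x, L (f x) 1 ∂μp
      = (πp * (∫ x, ℓ (f x) 1 ∂μp) - (1 - πp) * ∫ x, ℓ (f x) (-1) ∂μp) / (πp - (1 - πp)) := by
    rw [hL1, integral_div, integral_sub (hp1.const_mul _) (hpm1.const_mul _),
      integral_const_mul, integral_const_mul]
  have eL1m : ∫ x, L (f x) 1 ∂μm
      = (πp * (∫ x, ℓ (f x) 1 ∂μm) - (1 - πp) * ∫ x, ℓ (f x) (-1) ∂μm) / (πp - (1 - πp)) := by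
    rw [hL1, integral_div, integral_sub (hm1.const_mul _) (hmm1.const_mul _),
      integral_const_mul, integral_const_mul]
  have eLm1p : ∫ x, L (f x) (-1) ∂μp
      = (πp * (∫ x, ℓ (f x) (-1) ∂μp) - (1 - πp) * ∫ x, ℓ (f x) 1 ∂μp) / (πp - (1 - πp)) := by
    rw [hLm1, integral_div, integral_sub (hpm1.const_mul _) (hp1.const_mul _),
      integral_const_mul, integral_const_mul]
  have eLm1m : ∫ x, L (f x) (-1) ∂μm
      = (πp * (∫ x, ℓ (f x) (-1) ∂μm) - (1 - πp) * ∫ x, ℓ (f x) 1 ∂μm) / (πp - (1 - πp)) := by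
    rw [hLm1, integral_div, integral_sub (hmm1.const_mul _) (hm1.const_mul _),
      integral_const_mul, integral_const_mul]
  -- decomposition of integrals over μU, μS, μD
  have hUint : ∀ g : (Fin d → ℝ) → ℝ, Integrable g μp → Integrable g μm →
      ∫ x, g x ∂μU = πp * ∫ x, g x ∂μp + (1 - πp) * ∫ x, g x ∂μm := by
    intro g hgp hgm
    rw [hμU, integral_add_measure (hgp.smul_measure ENNReal.ofReal_ne_top)
        (hgm.smul_measure ENNReal.ofReal_ne_top),
      integral_smul_measure, integral_smul_measure,
      ENNReal.toReal_ofReal hπp0.le, ENNReal.toReal_ofReal hpm0.le]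
    simp [smul_eq_mul]
  have hSint : ∀ g : (Fin d → ℝ) → ℝ, Integrable g μp → Integrable g μm →
      ∫ p, (g p.1 + g p.2) / 2 ∂μS
        = (πp ^ 2 / (πp ^ 2 + (1 - πp) ^ 2)) * ∫ x, g x ∂μp + ((1 - πp) ^ 2 / (πp ^ 2 + (1 - πp) ^ 2)) * ∫ x, g x ∂μm := by
    intro g hgp hgm
    rw [hμS, integral_add_measure
        ((pair_integrable' μp μp g hgp hgp).smul_measure ENNReal.ofReal_ne_top)
        ((pair_integrable' μm μm g hgm hgm).smul_measure ENNReal.ofReal_ne_top),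
      integral_smul_measure, integral_smul_measure,
      pair_integral' μp μp g hgp hgp, pair_integral' μm μm g hgm hgm,
      ENNReal.toReal_ofReal (by positivity), ENNReal.toReal_ofReal (by positivity)]
    simp [smul_eq_mul]
  have hDint : ∀ g : (Fin d → ℝ) → ℝ, Integrable g μp → Integrable g μm →
      ∫ p, (g p.1 + g p.2) / 2 ∂μD = ((∫ x, g x ∂μp) + ∫ x, g x ∂μm) / 2 := by
    intro g hgp hgm
    rw [hμD, integral_add_measure
        ((pair_integrable' μp μm g hgp hgm).smul_measure (by simp))
        ((pair_integrable' μm μp g hgm hgp).smul_measure (by simp)),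
      integral_smul_measure, integral_smul_measure,
      pair_integral' μp μm g hgp hgm, pair_integral' μm μp g hgm hgp]
    norm_num [ENNReal.toReal_div, smul_eq_mul]
    ring
  -- the three risks agree with R
  have hSU : RSU f = R f := by
    have h1 := hSint (fun x => Lt (f x)) iLtp iLtm
    have h2 := hUint (fun x => L (f x) (-1)) iLm1p iLm1m
    rw [hRSU, hR, h1, h2, eLtp, eLtm, eLm1p, eLm1m]
    field_simp
    ring
  have hDU : RDU f = R f := by
    have h1 := hDint (fun x => Lt (f x)) iLtp iLtm
    have h2 := hUint (fun x => L (f x) 1) iL1p iL1m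
    rw [hRDU, hR, integral_neg, h1, h2, eLtp, eLtm, eL1p, eL1m]
    field_simp
    ring
  have hSD : RSD f = R f := by
    have h1 := hSint (fun x => L (f x) 1) iL1p iL1m
    have h2 := hDint (fun x => L (f x) (-1)) iLm1p iLm1m
    rw [hRSD, hR, h1, h2, eL1p, eL1m, eLm1p, eLm1m]
    field_simp
    ring
  refine ⟨fun γ₁ γ₂ γ₃ hγ => by rw [hSU, hDU, hSD]; linear_combination (R f) * hγ,
    fun γ => by rw [hSU, hSD]; ring,
    fun γ => by rw [hDU, hSD]; ring,
    fun γ => by rw [hSU, hDU]; ring⟩
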